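/- Let D ⊂ ℝⁿ (n ≥ 2) be a bounded open set with Lipschitz boundary, ρ a unit vector, h = sup_{x∈D} x·ρ, and p > 1. Then there exist C > 0 and τ₀ ≥ 1 such that for all τ ≥ τ₀, ∫_D e^{-pτ(h − x·ρ)} dx ≥ C·τ^{-n}. -/

import Mathlib

open Real MeasureTheory
open scoped RealInnerProductSpace Pointwise

/-- `D` has Lipschitz boundary: near every boundary point, after choosing a unit
direction `ν`, the set `D` coincides with the region above the graph of a Lipschitz
function defined on the hyperplane orthogonal to `ν`. -/
def HasLipschitzBoundary {n : ℕ} (D : Set (EuclideanSpace ℝ (Fin n))) : Prop :=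
  ∀ x ∈ frontier D, ∃ (ν : EuclideanSpace ℝ (Fin n)) (r L : ℝ)
      (f : EuclideanSpace ℝ (Fin n) → ℝ),
    ‖ν‖ = 1 ∧ 0 < r ∧ 0 < L ∧
    (∀ y z : EuclideanSpace ℝ (Fin n), |f y - f z| ≤ L * ‖y - z‖) ∧
    ∀ y ∈ Metric.ball x r, (y ∈ D ↔ f (y - ⟪y, ν⟫ • ν) < ⟪y, ν⟫)

theorem lower_bound_near_support_plane {n : ℕ} (hn : 2 ≤ n)
    (D : Set (EuclideanSpace ℝ (Fin n))) (hDne : D.Nonempty)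
    (hDopen : IsOpen D) (hDbd : Bornology.IsBounded D)
    (hDlip : HasLipschitzBoundary D)
    (ρ : EuclideanSpace ℝ (Fin n)) (hρ : ‖ρ‖ = 1)
    (h : ℝ) (hh : h = sSup ((fun x => ⟪x, ρ⟫) '' D))
    (p : ℝ) (hp : 1 < p) :
    ∃ C : ℝ, 0 < C ∧ ∃ τ₀ : ℝ, 1 ≤ τ₀ ∧ ∀ τ : ℝ, τ₀ ≤ τ →
      C * τ ^ (-(n : ℝ)) ≤ ∫ x in D, Real.exp (-(p * τ * (h - ⟪x, ρ⟫))) := by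
  classical
  have hpp : 0 < p := lt_trans one_pos hp
  set g : EuclideanSpace ℝ (Fin n) → ℝ := fun x => ⟪x, ρ⟫ with hg
  have hgc : Continuous g := continuous_id.inner continuous_const
  have hbdd : BddAbove (g '' D) := by
    obtain ⟨R, hR⟩ := hDbd.subset_closedBall 0
    refine ⟨R, ?_⟩
    rintro _ ⟨x, hx, rfl⟩
    have hxR : ‖x‖ ≤ R := by
      simpa [Metric.mem_closedBall, dist_zero_right] using hR hx
    calc g x ≤ ‖x‖ * ‖ρ‖ := real_inner_le_norm x ρ
      _ = ‖x‖ := by rw [hρ, mul_one]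
      _ ≤ R := hxR
  have hle : ∀ x ∈ D, g x ≤ h := fun x hx => hh ▸ le_csSup hbdd ⟨x, hx, rfl⟩
  have hKc : IsCompact (closure D) :=
    Metric.isCompact_of_isClosed_isBounded isClosed_closure hDbd.closure
  obtain ⟨z, hzcl, hzmax⟩ := hKc.exists_isMaxOn hDne.closure hgc.continuousOn
  have hzle : g z ≤ h := by
    have hclsub : closure D ⊆ {x | g x ≤ h} :=
      closure_minimal hle (isClosed_le hgc continuous_const)
    exact hclsub hzcl
  have hzge : h ≤ g z := by
    rw [hh]
    exact csSup_le (hDne.image g)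
      (by rintro _ ⟨x, hx, rfl⟩; exact hzmax (subset_closure hx))
  have hzval : g z = h := le_antisymm hzle hzge
  have hznotD : z ∉ D := by
    intro hzD
    obtain ⟨ε, hε, hball⟩ := Metric.isOpen_iff.mp hDopen z hzD
    have hmem : z + (ε/2) • ρ ∈ D := by
      apply hball
      rw [Metric.mem_ball, dist_eq_norm]
      have : z + (ε/2) • ρ - z = (ε/2) • ρ := by abel
      rw [this, norm_smul, hρ, mul_one,
        Real.norm_of_nonneg (by linarith : (0:ℝ) ≤ ε/2)]
      linarith
    have hval : g (z + (ε/2) • ρ) = h + ε/2 := by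
      have hself : ⟪ρ, ρ⟫ = 1 := by
        rw [real_inner_self_eq_norm_sq, hρ]; norm_num
      have hzval' : (⟪z, ρ⟫ : ℝ) = h := hzval
      simp only [hg, inner_add_left, real_inner_smul_left, hself, mul_one, hzval']
    have := hle _ hmem
    rw [hval] at this
    linarith
  have hzfr : z ∈ frontier D := by
    rw [frontier, hDopen.interior_eq]
    exact ⟨hzcl, hznotD⟩
  obtain ⟨ν, r, L, f, hν, hr, hL, hf, hchart⟩ := hDlip z hzfr
  set prj : EuclideanSpace ℝ (Fin n) → EuclideanSpace ℝ (Fin n) :=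
    fun y => y - ⟪y, ν⟫ • ν with hprj
  have hfc : Continuous f := by
    refine (LipschitzWith.of_dist_le_mul (K := ⟨L, hL.le⟩) ?_).continuous
    intro y z'
    have := hf y z'
    rw [Real.dist_eq, dist_eq_norm]
    exact this
  have hprjc : Continuous prj :=
    continuous_id.sub (by fun_prop)
  -- f (prj z) ≤ ⟪z, ν⟫
  have hfz : f (prj z) ≤ ⟪z, ν⟫ := by
    have key : ∀ ε > 0, f (prj z) - ⟪z, ν⟫ ≤ 0 + ε := by
      intro ε hε
      set G : EuclideanSpace ℝ (Fin n) → ℝ := fun y => f (prj y) - ⟪y, ν⟫ with hG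
      have hGc : Continuous G :=
        (hfc.comp hprjc).sub (continuous_id.inner continuous_const)
      obtain ⟨δ, hδ, hδ'⟩ := Metric.continuousAt_iff.mp hGc.continuousAt ε hε
      obtain ⟨y, hyD, hyd⟩ := Metric.mem_closure_iff.mp hzcl (min δ r) (lt_min hδ hr)
      have h1 : y ∈ Metric.ball z r := by
        rw [Metric.mem_ball, dist_comm]
        exact hyd.trans_le (min_le_right _ _)
      have h2 : G y < 0 := sub_neg.mpr ((hchart y h1).mp hyD)
      have h3 : dist (G y) (G z) < ε := by
        apply hδ'
        rw [dist_comm] at hyd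
        exact hyd.trans_le (min_le_left _ _)
      have h4 : G z - G y ≤ |G z - G y| := le_abs_self _
      rw [abs_sub_comm, ← Real.dist_eq] at h4
      simp only [hG] at *
      linarith
    have := le_of_forall_pos_le_add key
    linarith
  -- the cone set
  set V : Set (EuclideanSpace ℝ (Fin n)) :=
    {v | L * ‖prj v‖ < ⟪v, ν⟫} ∩ Metric.ball 0 r with hV
  have hVopen : IsOpen V := by
    apply IsOpen.inter ?_ Metric.isOpen_ball
    have hc : Continuous fun v => L * ‖prj v‖ - ⟪v, ν⟫ :=
      (continuous_const.mul hprjc.norm).sub (continuous_id.inner continuous_const)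
    have := isOpen_lt hc (continuous_const : Continuous fun _ => (0:ℝ))
    convert this using 1
    ext v; simp [sub_neg]
    ext v; exact (sub_neg (α := ℝ)).symm
  have hVne : V.Nonempty := by
    refine ⟨(r/2) • ν, ?_, ?_⟩
    · show L * ‖prj ((r/2) • ν)‖ < ⟪(r/2) • ν, ν⟫
      have hself : ⟪ν, ν⟫ = 1 := by
        rw [real_inner_self_eq_norm_sq, hν]; norm_num
      have hprjν : prj ((r/2) • ν) = 0 := by
        simp only [hprj, real_inner_smul_left, hself, mul_one]
        abel
      rw [hprjν, real_inner_smul_left, hself]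
      simp only [norm_zero, mul_zero, mul_one]
      linarith
    · rw [Metric.mem_ball, dist_zero_right, norm_smul, hν, mul_one,
        Real.norm_of_nonneg (by linarith : (0:ℝ) ≤ r/2)]
      linarith
  have hVvolpos : 0 < volume V := hVopen.measure_pos volume hVne
  have hVvolfin : volume V < ⊤ :=
    lt_of_le_of_lt (measure_mono Set.inter_subset_right) measure_ball_lt_top
  -- key membership
  have hkey : ∀ τ : ℝ, 1 ≤ τ → ∀ v ∈ V, z + τ⁻¹ • v ∈ D := by
    intro τ hτ v hv
    have hτ0 : (0:ℝ) < τ := lt_of_lt_of_le one_pos hτ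
    have hτi : (0:ℝ) < τ⁻¹ := inv_pos.mpr hτ0
    have hτi1 : τ⁻¹ ≤ 1 := inv_le_one_of_one_le₀ hτ
    obtain ⟨hv1, hv2⟩ := hv
    have hvr : ‖v‖ < r := by
      rwa [Metric.mem_ball, dist_zero_right] at hv2
    have hmemball : z + τ⁻¹ • v ∈ Metric.ball z r := by
      rw [Metric.mem_ball, dist_eq_norm]
      have : z + τ⁻¹ • v - z = τ⁻¹ • v := by abel
      rw [this, norm_smul, Real.norm_of_nonneg hτi.le]
      calc τ⁻¹ * ‖v‖ ≤ 1 * ‖v‖ := by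
            apply mul_le_mul_of_nonneg_right hτi1 (norm_nonneg v)
        _ < r := by simpa using hvr
    rw [hchart _ hmemball]
    have hprjy : (z + τ⁻¹ • v) - ⟪z + τ⁻¹ • v, ν⟫ • ν = prj z + τ⁻¹ • prj v := by
      simp only [hprj, inner_add_left, real_inner_smul_left]
      module
    rw [hprjy]
    have hstep : f (prj z + τ⁻¹ • prj v) ≤ f (prj z) + L * (τ⁻¹ * ‖prj v‖) := by
      have h' := hf (prj z + τ⁻¹ • prj v) (prj z)
      have heq : (prj z + τ⁻¹ • prj v) - prj z = τ⁻¹ • prj v := by abel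
      rw [heq, norm_smul, Real.norm_of_nonneg hτi.le] at h'
      have := le_of_abs_le h'
      linarith
    have hlt : L * (τ⁻¹ * ‖prj v‖) < τ⁻¹ * ⟪v, ν⟫ := by
      have : τ⁻¹ * (L * ‖prj v‖) < τ⁻¹ * ⟪v, ν⟫ :=
        mul_lt_mul_of_pos_left hv1 hτi
      linarith [this]
    have hrhs : ⟪z + τ⁻¹ • v, ν⟫ = ⟪z, ν⟫ + τ⁻¹ * ⟪v, ν⟫ := by
      rw [inner_add_left, real_inner_smul_left]
    rw [hrhs]
    calc f (prj z + τ⁻¹ • prj v) ≤ f (prj z) + L * (τ⁻¹ * ‖prj v‖) := hstep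
      _ < ⟪z, ν⟫ + τ⁻¹ * ⟪v, ν⟫ := by linarith
  -- the constant
  refine ⟨Real.exp (-(p * r)) * (volume V).toReal, ?_, 1, le_refl 1, ?_⟩
  · have := ENNReal.toReal_pos hVvolpos.ne' hVvolfin.ne
    positivity
  intro τ hτ
  have hτ0 : (0:ℝ) < τ := lt_of_lt_of_le one_pos hτ
  have hτi : (0:ℝ) < τ⁻¹ := inv_pos.mpr hτ0
  set F : EuclideanSpace ℝ (Fin n) → ℝ :=
    fun x => Real.exp (-(p * τ * (h - ⟪x, ρ⟫))) with hF
  have hFc : Continuous F :=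
    Real.continuous_exp.comp
      ((continuous_const.mul (continuous_const.sub (continuous_id.inner continuous_const))).neg)
  -- the scaled cone
  set S : Set (EuclideanSpace ℝ (Fin n)) := (fun v => z + τ⁻¹ • v) '' V with hS
  have hSD : S ⊆ D := by
    rintro _ ⟨v, hv, rfl⟩
    exact hkey τ hτ v hv
  have hSeq : S = z +ᵥ (τ⁻¹ • V : Set (EuclideanSpace ℝ (Fin n))) := by
    rw [← Set.image_vadd, ← Set.image_smul, Set.image_image]
    rfl
  have hSopen : IsOpen S := by
    rw [hSeq]
    have h1 : IsOpen (τ⁻¹ • V) := hVopen.smul₀ (ne_of_gt hτi)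
    exact h1.vadd z
  have hSvol : volume S = ENNReal.ofReal (τ⁻¹ ^ n) * volume V := by
    rw [hSeq, measure_vadd, Measure.addHaar_smul]
    congr 2
    simp [abs_of_pos hτi, finrank_euclideanSpace_fin]
    rw [abs_of_pos hτ0]
  have hSfin : volume S ≠ ⊤ := by
    rw [hSvol]
    exact (ENNReal.mul_lt_top ENNReal.ofReal_lt_top hVvolfin).ne
  -- bound on S
  have hbound : ∀ x ∈ S, Real.exp (-(p * r)) ≤ F x := by
    rintro _ ⟨v, hv, rfl⟩
    obtain ⟨hv1, hv2⟩ := hv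
    have hvr : ‖v‖ < r := by rwa [Metric.mem_ball, dist_zero_right] at hv2
    have hval : h - ⟪z + τ⁻¹ • v, ρ⟫ = -(τ⁻¹ * ⟪v, ρ⟫) := by
      rw [inner_add_left, real_inner_smul_left, ← hzval]
      simp only [hg]
      ring
    have hvρ : |⟪v, ρ⟫| ≤ ‖v‖ := by
      calc |⟪v, ρ⟫| ≤ ‖v‖ * ‖ρ‖ := abs_real_inner_le_norm v ρ
        _ = ‖v‖ := by rw [hρ, mul_one]
    have hexp : p * τ * (h - ⟪z + τ⁻¹ • v, ρ⟫) ≤ p * r := by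
      rw [hval]
      have h1 : -(τ⁻¹ * ⟪v, ρ⟫) ≤ τ⁻¹ * ‖v‖ := by
        have h2 : -⟪v, ρ⟫ ≤ ‖v‖ := by
          have := neg_abs_le ⟪v, ρ⟫
          linarith
        calc -(τ⁻¹ * ⟪v, ρ⟫) = τ⁻¹ * (-⟪v, ρ⟫) := by ring
          _ ≤ τ⁻¹ * ‖v‖ := mul_le_mul_of_nonneg_left h2 hτi.le
      calc p * τ * -(τ⁻¹ * ⟪v, ρ⟫) ≤ p * τ * (τ⁻¹ * ‖v‖) := by
            apply mul_le_mul_of_nonneg_left h1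
            positivity
        _ = p * ‖v‖ := by field_simp
        _ ≤ p * r := mul_le_mul_of_nonneg_left hvr.le hpp.le
    simp only [hF]
    apply Real.exp_le_exp.mpr
    linarith
  -- integrability of F on D
  have hDfin : volume D ≠ ⊤ := by
    obtain ⟨R, hR⟩ := hDbd.subset_closedBall 0
    exact (lt_of_le_of_lt (measure_mono hR) measure_closedBall_lt_top).ne
  have hFint : IntegrableOn F D := by
    apply Measure.integrableOn_of_bounded hDfin hFc.aestronglyMeasurable (M := 1)
    filter_upwards [ae_restrict_mem hDopen.measurableSet] with x hx
    have h1 : 0 ≤ h - ⟪x, ρ⟫ := by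
      have := hle x hx
      simp only [hg] at this
      linarith
    have h2 : -(p * τ * (h - ⟪x, ρ⟫)) ≤ 0 := by
      have : 0 ≤ p * τ * (h - ⟪x, ρ⟫) := by positivity
      linarith
    rw [Real.norm_of_nonneg (Real.exp_nonneg _)]
    exact Real.exp_le_one_iff.mpr h2
  -- chain of inequalities
  have step1 : Real.exp (-(p * r)) * (volume S).toReal ≤ ∫ x in S, F x := by
    rw [mul_comm]
    apply setIntegral_ge_of_const_le hSopen.measurableSet hSfin hbound
    exact hFint.mono_set hSD
  have step2 : (∫ x in S, F x) ≤ ∫ x in D, F x := by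
    apply setIntegral_mono_set hFint
    · filter_upwards with x
      exact Real.exp_nonneg _
    · exact HasSubset.Subset.eventuallyLE hSD
  have hvolS : (volume S).toReal = τ⁻¹ ^ n * (volume V).toReal := by
    rw [hSvol, ENNReal.toReal_mul, ENNReal.toReal_ofReal (by positivity)]
  have hrpow : τ ^ (-(n : ℝ)) = τ⁻¹ ^ n := by
    rw [Real.rpow_neg hτ0.le, Real.rpow_natCast, ← inv_pow]
  calc Real.exp (-(p * r)) * (volume V).toReal * τ ^ (-(n : ℝ))
      = Real.exp (-(p * r)) * (volume S).toReal := by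
        rw [hrpow, hvolS]; ring
    _ ≤ ∫ x in S, F x := step1
    _ ≤ ∫ x in D, F x := step2
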